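/- arXiv:2407.08233 — 2 statements merged into one kernel-verified Lean document; each statement's English description precedes it below -/
import Mathlib

section
/- Joint convexity of the perspective-type function: for α > 1, the map (x, y) ↦ x^α / y^{α-1} is jointly convex on (0,∞) × (0,∞). -/
open Real

private lemma key_holder (α : ℝ) (hα : 1 < α) {u1 u2 v1 v2 : ℝ}
    (hu1 : 0 < u1) (hu2 : 0 < u2) (hv1 : 0 < v1) (hv2 : 0 < v2) :
    (u1 + u2) ^ α / (v1 + v2) ^ (α - 1) ≤ u1 ^ α / v1 ^ (α - 1) + u2 ^ α / v2 ^ (α - 1) := by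
  have hα0 : (0:ℝ) < α := lt_trans one_pos hα
  have hα1 : (0:ℝ) < α - 1 := by linarith
  set c : ℝ := (α - 1) / α with hc
  have hconj : Real.HolderConjugate α (α / (α - 1)) := by
    exact (Real.holderConjugate_iff_eq_conjExponent hα).mpr rfl
  set f : Fin 2 → ℝ := ![u1 / v1 ^ c, u2 / v2 ^ c] with hf
  set g : Fin 2 → ℝ := ![v1 ^ c, v2 ^ c] with hg
  have hf0 : ∀ i ∈ (Finset.univ : Finset (Fin 2)), 0 ≤ f i := by
    intro i _
    fin_cases i <;> simp [hf] <;> positivity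
  have hg0 : ∀ i ∈ (Finset.univ : Finset (Fin 2)), 0 ≤ g i := by
    intro i _
    fin_cases i <;> simp [hg] <;> positivity
  have H := Real.inner_le_Lp_mul_Lq_of_nonneg (s := Finset.univ) hconj hf0 hg0
  have hfg : ∀ (u v : ℝ), 0 < u → 0 < v → (u / v ^ c) * (v ^ c) = u := by
    intro u v hu hv
    field_simp
  have hfp : ∀ (u v : ℝ), 0 < u → 0 < v → (u / v ^ c) ^ α = u ^ α / v ^ (α - 1) := by
    intro u v hu hv
    rw [Real.div_rpow hu.le (by positivity), ← Real.rpow_mul hv.le, hc,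
      div_mul_cancel₀ _ hα0.ne']
  have hgq : ∀ (v : ℝ), 0 < v → (v ^ c) ^ (α / (α - 1)) = v := by
    intro v hv
    rw [← Real.rpow_mul hv.le, show c * (α / (α - 1)) = 1 by rw [hc]; field_simp,
      Real.rpow_one]
  rw [Fin.sum_univ_two, Fin.sum_univ_two, Fin.sum_univ_two] at H
  simp only [hf, hg, Matrix.cons_val_zero, Matrix.cons_val_one, Matrix.head_cons] at H
  rw [hfg u1 v1 hu1 hv1, hfg u2 v2 hu2 hv2, hfp u1 v1 hu1 hv1, hfp u2 v2 hu2 hv2,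
    hgq v1 hv1, hgq v2 hv2] at H
  -- H : u1 + u2 ≤ (S)^(1/α) * (v1+v2)^(1/(α/(α-1)))
  set S : ℝ := u1 ^ α / v1 ^ (α - 1) + u2 ^ α / v2 ^ (α - 1) with hS
  have hSpos : 0 < S := by positivity
  have hvpos : (0:ℝ) < v1 + v2 := by linarith
  have H2 : (u1 + u2) ^ α ≤ S * (v1 + v2) ^ (α - 1) := by
    have := Real.rpow_le_rpow (by positivity) H hα0.le
    rw [Real.mul_rpow (by positivity) (by positivity), ← Real.rpow_mul hSpos.le,
      ← Real.rpow_mul hvpos.le] at this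
    rw [one_div_mul_cancel hα0.ne', Real.rpow_one] at this
    have heq : 1 / (α / (α - 1)) * α = α - 1 := by field_simp
    rwa [heq] at this
  rw [div_le_iff₀ (by positivity)]
  exact H2

/-- for `α > 1`, the map `(x, y) ↦ x^α / y^(α-1)` is jointly convex on
`(0,∞) × (0,∞)`. -/
theorem perspective_jointly_convex (α : ℝ) (hα : 1 < α) :
    ConvexOn ℝ (Set.Ioi (0 : ℝ) ×ˢ Set.Ioi (0 : ℝ))
      (fun p : ℝ × ℝ => p.1 ^ α / p.2 ^ (α - 1)) := by
  constructor
  · exact (convex_Ioi (0:ℝ)).prod (convex_Ioi 0)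
  · rintro ⟨x1, y1⟩ ⟨hx1, hy1⟩ ⟨x2, y2⟩ ⟨hx2, hy2⟩ a b ha hb hab
    simp only [Set.mem_Ioi] at hx1 hy1 hx2 hy2
    rcases eq_or_lt_of_le ha with rfl | ha'
    · simp_all
    rcases eq_or_lt_of_le hb with rfl | hb'
    · simp_all
    have key := key_holder α hα (mul_pos ha' hx1) (mul_pos hb' hx2)
      (mul_pos ha' hy1) (mul_pos hb' hy2)
    have habs : ∀ (t z w : ℝ), 0 < t → 0 < z → 0 < w →
        (t * z) ^ α / (t * w) ^ (α - 1) = t * (z ^ α / w ^ (α - 1)) := by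
      intro t z w ht hz hw
      rw [Real.mul_rpow ht.le hz.le, Real.mul_rpow ht.le hw.le]
      rw [show t ^ α = t ^ (α - 1) * t by
        rw [← Real.rpow_add_one ht.ne']; congr 1; ring]
      have h1 : t ^ (α - 1) ≠ 0 := by positivity
      field_simp
    rw [habs a x1 y1 ha' hx1 hy1, habs b x2 y2 hb' hx2 hy2] at key
    simpa using key
end

section
/- For the ReLU-splitting subproblem, the minimizer of U ↦ ‖x' - max(U,0)‖² + ‖U - z‖² (scalar case, with x' ≥ 0) is given by: U* = z if -x' ≤ z ≤ -(√2 - 1)x' ≤ 0; U* = min(0, z) if z + x' ≤ 0; and U* = (z + x')/2 otherwise. -/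
/-- the scalar ReLU-splitting subproblem
`h(U) = (x' - max(U,0))² + (U - z)²` with `x' ≥ 0` has global minimizer
`U* = z` if `-x' ≤ z ≤ -(√2-1)x' ≤ 0`, `U* = min(0,z)` if `z + x' ≤ 0`, and
`U* = (z + x')/2` otherwise. -/
theorem relu_splitting_minimizer (x' z : ℝ) (hx' : 0 ≤ x') :
    ((-x' ≤ z ∧ z ≤ -(Real.sqrt 2 - 1) * x' ∧ -(Real.sqrt 2 - 1) * x' ≤ 0) →
      IsMinOn (fun U : ℝ => (x' - max U 0) ^ 2 + (U - z) ^ 2) Set.univ z) ∧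
    (z + x' ≤ 0 →
      IsMinOn (fun U : ℝ => (x' - max U 0) ^ 2 + (U - z) ^ 2) Set.univ (min 0 z)) ∧
    ((¬(-x' ≤ z ∧ z ≤ -(Real.sqrt 2 - 1) * x' ∧ -(Real.sqrt 2 - 1) * x' ≤ 0) ∧
        ¬(z + x' ≤ 0)) →
      IsMinOn (fun U : ℝ => (x' - max U 0) ^ 2 + (U - z) ^ 2) Set.univ ((z + x') / 2)) := by
  have hs : Real.sqrt 2 ^ 2 = 2 := Real.sq_sqrt (by norm_num)
  have hs1 : 1 ≤ Real.sqrt 2 := by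
    nlinarith [Real.sqrt_nonneg 2, hs]
  set s := Real.sqrt 2 with hsdef
  refine ⟨?_, ?_, ?_⟩
  · rintro ⟨h1, h2, _⟩
    have hz0 : z ≤ 0 := le_trans h2 (by nlinarith)
    rw [isMinOn_iff]
    intro U _
    rw [max_eq_right hz0]
    have hxz : x' - z ≥ s * x' := by nlinarith
    have hxz2 : (x' - z) ^ 2 ≥ 2 * x' ^ 2 := by nlinarith [mul_nonneg (by linarith : (0:ℝ) ≤ s) hx']
    rcases le_total U 0 with hU | hU
    · rw [max_eq_right hU]; nlinarith [sq_nonneg (U - z)]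
    · rw [max_eq_left hU]; nlinarith [sq_nonneg (x' + z - 2 * U)]
  · intro hzx
    have hz0 : z ≤ -x' := by linarith
    have hz0' : z ≤ 0 := le_trans hz0 (by linarith)
    rw [min_eq_right hz0']
    rw [isMinOn_iff]
    intro U _
    rw [max_eq_right hz0']
    rcases le_total U 0 with hU | hU
    · rw [max_eq_right hU]; nlinarith [sq_nonneg (U - z)]
    · rw [max_eq_left hU]; nlinarith [sq_nonneg (x' + z - 2 * U), sq_nonneg (U - z)]
  · rintro ⟨hn1, hn2⟩
    push_neg at hn2
    have h1 : -x' ≤ z := by linarith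
    have h3 : -(s - 1) * x' ≤ 0 := by nlinarith
    have h2 : -(s - 1) * x' < z := by
      by_contra hc
      push_neg at hc
      exact hn1 ⟨h1, hc, h3⟩
    rw [isMinOn_iff]
    intro U _
    have hm : max ((z + x') / 2) 0 = (z + x') / 2 := max_eq_left (by linarith)
    rw [hm]
    rcases le_total U 0 with hU | hU
    · rw [max_eq_right hU]
      rcases le_total z 0 with hz | hz
      · have hxz : x' - z < s * x' := by nlinarith
        have hxz2 : (x' - z) ^ 2 ≤ 2 * x' ^ 2 := by nlinarith
        nlinarith [sq_nonneg (U - z)]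
      · nlinarith [mul_nonneg (neg_nonneg.2 hU) (by linarith : 0 ≤ 2 * z - U), sq_nonneg (x' + z)]
    · rw [max_eq_left hU]
      nlinarith [sq_nonneg (x' + z - 2 * U)]
end
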